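/- Fix k ∈ ℝ and Δx₀ > 0. Let Φ : ℝ → ℝ≥0 with Φ(k) > 0, let Ū : ℝ → ℂ, and let B̂ : ℝ → ℂ be bounded, continuous at 0, with B̂(0) ≠ 0. Assume there exist Q > 0 and monotone nonincreasing functions g, h : [0,∞) → [0,∞) with g(t) → 0 and h(t) → 0 as t → ∞ such that |Ū(q) Φ(q)| ≤ g(|q|) and Φ(q) ≤ h(|q|) whenever |q| ≥ Q, and that ∑_{n≥1} ( g(2πn/Δx₀ − |k| − 1) + h(2πn/Δx₀ − |k| − 1) ) < ∞ (the sum taken over n with 2πn/Δx₀ > |k| + Q + 1). Then, as λ → ∞ through the positive integers, the ratio [ ∑_{n∈ℤ} Ū(k + 2πnλ/Δx₀) Φ(k + 2πnλ/Δx₀) |B̂(k/λ + 2πn/Δx₀)|² ] / [ ∑_{m∈ℤ} Φ(k + 2πmλ/Δx₀) |B̂(k/λ + 2πm/Δx₀)|² ] converges to Ū(k). -/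

import Mathlib

open Filter Topology

set_option maxHeartbeats 2000000 in
/-- **Consistency of translation-invariant IFD schemes.**
Fix a momentum `k`.  If the prior `Φ` and the product `Ū·Φ` decay at large momenta
(dominated by monotone functions `h`, `g` tending to zero, with a summability condition
over the Brillouin zones), and the bin Fourier transform `B̂` is bounded, continuous at
`0` with `B̂(0) ≠ 0`, then the transport eigenvalue
`T_λ(k) = [∑_n Ū(k+2πnλ/Δx₀) Φ(k+2πnλ/Δx₀) |B̂(k/λ+2πn/Δx₀)|²]
        / [∑_m Φ(k+2πmλ/Δx₀) |B̂(k/λ+2πm/Δx₀)|²]`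
converges to `Ū(k)` as the resolution `λ → ∞` through the positive integers. -/
theorem ifd_translation_invariant_consistency
    (k : ℝ) (Δx₀ : ℝ) (hΔx₀ : 0 < Δx₀)
    (Φ : ℝ → ℝ) (hΦ0 : ∀ q, 0 ≤ Φ q) (hΦk : 0 < Φ k)
    (Ubar : ℝ → ℂ)
    (Bhat : ℝ → ℂ) (hBbdd : ∃ C : ℝ, ∀ q, ‖Bhat q‖ ≤ C)
    (hBcont : ContinuousAt Bhat 0) (hB0 : Bhat 0 ≠ 0)
    (Q : ℝ) (hQ : 0 < Q)
    (g h : ℝ → ℝ)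
    (hg0 : ∀ t, 0 ≤ t → 0 ≤ g t) (hh0 : ∀ t, 0 ≤ t → 0 ≤ h t)
    (hganti : AntitoneOn g (Set.Ici (0 : ℝ))) (hhanti : AntitoneOn h (Set.Ici (0 : ℝ)))
    (hgtend : Tendsto g atTop (nhds 0)) (hhtend : Tendsto h atTop (nhds 0))
    (hgbound : ∀ q : ℝ, Q ≤ |q| → ‖Ubar q * (Φ q : ℂ)‖ ≤ g |q|)
    (hhbound : ∀ q : ℝ, Q ≤ |q| → Φ q ≤ h |q|)
    (hsum : Summable fun n : ℕ =>
      if |k| + Q + 1 < 2 * Real.pi * (n + 1) / Δx₀ then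
        g (2 * Real.pi * (n + 1) / Δx₀ - |k| - 1) +
          h (2 * Real.pi * (n + 1) / Δx₀ - |k| - 1)
      else 0) :
    Tendsto
      (fun lam : ℕ =>
        (∑' n : ℤ, Ubar (k + 2 * Real.pi * n * lam / Δx₀) *
            (Φ (k + 2 * Real.pi * n * lam / Δx₀) : ℂ) *
            ((‖Bhat (k / lam + 2 * Real.pi * n / Δx₀)‖ ^ 2 : ℝ) : ℂ)) /
          (∑' m : ℤ, ((Φ (k + 2 * Real.pi * m * lam / Δx₀) *
            ‖Bhat (k / lam + 2 * Real.pi * m / Δx₀)‖ ^ 2 : ℝ) : ℂ)))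
      atTop (nhds (Ubar k)) := by
  -- Basic constants
  set c : ℝ := 2 * Real.pi / Δx₀ with hc_def
  have hπ : 0 < 2 * Real.pi := by positivity
  have hc : 0 < c := div_pos hπ hΔx₀
  obtain ⟨C0, hC0⟩ := hBbdd
  set C : ℝ := max C0 0 with hC_def
  have hCnn : 0 ≤ C := le_max_right _ _
  have hCb : ∀ q, ‖Bhat q‖ ≤ C := fun q => le_trans (hC0 q) (le_max_left _ _)
  set C2 : ℝ := C ^ 2 with hC2_def
  have hC2nn : 0 ≤ C2 := sq_nonneg _
  have hC2b : ∀ q, ‖Bhat q‖ ^ 2 ≤ C2 := fun q =>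
    pow_le_pow_left₀ (norm_nonneg _) (hCb q) 2
  -- the functions
  set f : ℕ → ℤ → ℂ := fun lam n =>
    Ubar (k + 2 * Real.pi * n * lam / Δx₀) *
      (Φ (k + 2 * Real.pi * n * lam / Δx₀) : ℂ) *
      ((‖Bhat (k / lam + 2 * Real.pi * n / Δx₀)‖ ^ 2 : ℝ) : ℂ) with hf_def
  set d : ℕ → ℤ → ℂ := fun lam n =>
    ((Φ (k + 2 * Real.pi * n * lam / Δx₀) *
      ‖Bhat (k / lam + 2 * Real.pi * n / Δx₀)‖ ^ 2 : ℝ) : ℂ) with hd_def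
  set fT : ℕ → ℤ → ℂ := fun lam n => if n = 0 then 0 else f lam n with hfT_def
  set dT : ℕ → ℤ → ℂ := fun lam n => if n = 0 then 0 else d lam n with hdT_def
  -- the threshold
  set N₀ : ℕ := ⌈(|k| + Q + 1) / c⌉₊ + 1 with hN₀_def
  have hN₀pos : 1 ≤ N₀ := Nat.le_add_left 1 _
  have hN₀c : |k| + Q + 1 ≤ c * N₀ := by
    have h1 : (|k| + Q + 1) / c ≤ (N₀ : ℝ) := by
      refine le_trans (Nat.le_ceil _) ?_
      exact_mod_cast Nat.le_succ _
    calc |k| + Q + 1 = (|k| + Q + 1) / c * c := by field_simp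
    _ ≤ (N₀ : ℝ) * c := by
        exact mul_le_mul_of_nonneg_right h1 hc.le
    _ = c * N₀ := by ring
  have hclam : ∀ lam : ℕ, N₀ ≤ lam → |k| + Q + 1 ≤ c * lam := by
    intro lam hlam
    refine le_trans hN₀c ?_
    have : (N₀ : ℝ) ≤ lam := by exact_mod_cast hlam
    nlinarith
  -- majorant
  set M : ℤ → ℝ := fun n => max Q (c * |(n : ℝ)| - |k| - 1) with hM_def
  have hM0 : ∀ n, (0 : ℝ) ≤ M n := fun n => le_trans hQ.le (le_max_left _ _)
  set bound : ℤ → ℝ := fun n => if n = 0 then 0 else C2 * (g (M n) + h (M n))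
    with hbound_def
  have hbound0 : ∀ n, 0 ≤ bound n := by
    intro n
    by_cases hn : n = 0 <;> simp [hbound_def, hn]
    have := hg0 (M n) (hM0 n)
    have := hh0 (M n) (hM0 n)
    positivity
  -- key geometric estimates
  have key : ∀ lam : ℕ, N₀ ≤ lam → ∀ n : ℤ, n ≠ 0 →
      Q ≤ c * |(n : ℝ)| * lam - |k| ∧ M n ≤ c * |(n : ℝ)| * lam - |k| ∧
      c * |(n : ℝ)| * lam - |k| ≤ |k + 2 * Real.pi * n * lam / Δx₀| := by
    intro lam hlam n hn
    have h1 : (1 : ℝ) ≤ |(n : ℝ)| := by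
      have := Int.one_le_abs hn
      calc (1 : ℝ) = ((1 : ℤ) : ℝ) := by norm_num
      _ ≤ ((|n| : ℤ) : ℝ) := by exact_mod_cast this
      _ = |(n : ℝ)| := by push_cast; ring
    have hlam1 : (1 : ℝ) ≤ (lam : ℝ) := by
      exact_mod_cast le_trans hN₀pos hlam
    have hck : |k| + Q + 1 ≤ c * lam := hclam lam hlam
    have hA : Q ≤ c * |(n : ℝ)| * lam - |k| := by
      nlinarith [mul_nonneg (mul_nonneg hc.le (by linarith : (0:ℝ) ≤ |(n : ℝ)| - 1))
        (by linarith : (0:ℝ) ≤ (lam : ℝ))]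
    refine ⟨hA, ?_, ?_⟩
    · refine max_le hA ?_
      nlinarith [mul_nonneg (mul_nonneg hc.le (abs_nonneg (n : ℝ)))
        (by linarith : (0:ℝ) ≤ (lam : ℝ) - 1)]
    · have hx : 2 * Real.pi * (n : ℝ) * lam / Δx₀ = c * ((n : ℝ) * lam) := by
        rw [hc_def]; ring
      have habsx : |2 * Real.pi * (n : ℝ) * lam / Δx₀| = c * |(n : ℝ)| * lam := by
        rw [hx, abs_mul, abs_mul, abs_of_pos hc, Nat.abs_cast, mul_assoc]
      have h2 := abs_add_le (k + 2 * Real.pi * (n : ℝ) * lam / Δx₀) (-k)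
      have h3 : k + 2 * Real.pi * (n : ℝ) * lam / Δx₀ + -k
          = 2 * Real.pi * (n : ℝ) * lam / Δx₀ := by ring
      rw [h3, abs_neg, habsx] at h2
      linarith
  -- norm bounds on the tail terms
  have hnormf : ∀ lam : ℕ, N₀ ≤ lam → ∀ n : ℤ, n ≠ 0 →
      ‖f lam n‖ ≤ C2 * g (c * |(n : ℝ)| * lam - |k|) := by
    intro lam hlam n hn
    obtain ⟨hA, _, hB⟩ := key lam hlam n hn
    set a := k + 2 * Real.pi * (n : ℝ) * lam / Δx₀
    have hQa : Q ≤ |a| := le_trans hA hB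
    have hga : ‖Ubar a * (Φ a : ℂ)‖ ≤ g |a| := hgbound a hQa
    have hmono : g |a| ≤ g (c * |(n : ℝ)| * lam - |k|) := by
      refine hganti ?_ ?_ hB
      · exact Set.mem_Ici.mpr (by linarith)
      · exact Set.mem_Ici.mpr (abs_nonneg _)
    have hr : ‖f lam n‖ = ‖Ubar a * (Φ a : ℂ)‖ * ‖Bhat (k / lam + 2 * Real.pi * n / Δx₀)‖ ^ 2 := by
      have hfe : f lam n = Ubar a * (Φ a : ℂ) *
          ((‖Bhat (k / lam + 2 * Real.pi * n / Δx₀)‖ ^ 2 : ℝ) : ℂ) := rfl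
      rw [hfe, norm_mul, Complex.norm_real, Real.norm_eq_abs,
        abs_of_nonneg (sq_nonneg (‖Bhat (k / lam + 2 * Real.pi * n / Δx₀)‖))]
    rw [hr]
    have hgnn : 0 ≤ g (c * |(n : ℝ)| * lam - |k|) := hg0 _ (by linarith)
    calc ‖Ubar a * (Φ a : ℂ)‖ * ‖Bhat (k / lam + 2 * Real.pi * n / Δx₀)‖ ^ 2
        ≤ g (c * |(n : ℝ)| * lam - |k|) * C2 := by
          refine mul_le_mul (le_trans hga hmono) (hC2b _) (sq_nonneg _) hgnn
    _ = C2 * g (c * |(n : ℝ)| * lam - |k|) := by ring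
  have hnormd : ∀ lam : ℕ, N₀ ≤ lam → ∀ n : ℤ, n ≠ 0 →
      ‖d lam n‖ ≤ C2 * h (c * |(n : ℝ)| * lam - |k|) := by
    intro lam hlam n hn
    obtain ⟨hA, _, hB⟩ := key lam hlam n hn
    set a := k + 2 * Real.pi * (n : ℝ) * lam / Δx₀
    have hQa : Q ≤ |a| := le_trans hA hB
    have hha : Φ a ≤ h |a| := hhbound a hQa
    have hmono : h |a| ≤ h (c * |(n : ℝ)| * lam - |k|) := by
      refine hhanti ?_ ?_ hB
      · exact Set.mem_Ici.mpr (by linarith)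
      · exact Set.mem_Ici.mpr (abs_nonneg _)
    have hr : ‖d lam n‖ = Φ a * ‖Bhat (k / lam + 2 * Real.pi * n / Δx₀)‖ ^ 2 := by
      have hde : d lam n = ((Φ a *
          ‖Bhat (k / lam + 2 * Real.pi * n / Δx₀)‖ ^ 2 : ℝ) : ℂ) := rfl
      rw [hde, Complex.norm_real, Real.norm_eq_abs,
        abs_of_nonneg (mul_nonneg (hΦ0 a)
          (sq_nonneg (‖Bhat (k / lam + 2 * Real.pi * n / Δx₀)‖)))]
    rw [hr]
    have hhnn : 0 ≤ h (c * |(n : ℝ)| * lam - |k|) := hh0 _ (by linarith)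
    calc Φ a * ‖Bhat (k / lam + 2 * Real.pi * n / Δx₀)‖ ^ 2
        ≤ h (c * |(n : ℝ)| * lam - |k|) * C2 := by
          refine mul_le_mul (le_trans hha hmono) (hC2b _) (sq_nonneg _) hhnn
    _ = C2 * h (c * |(n : ℝ)| * lam - |k|) := by ring
  -- domination by `bound`
  have hgM : ∀ lam : ℕ, N₀ ≤ lam → ∀ n : ℤ, n ≠ 0 →
      g (c * |(n : ℝ)| * lam - |k|) ≤ g (M n) ∧
      h (c * |(n : ℝ)| * lam - |k|) ≤ h (M n) := by
    intro lam hlam n hn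
    obtain ⟨hA, hM, _⟩ := key lam hlam n hn
    constructor
    · exact hganti (Set.mem_Ici.mpr (hM0 n)) (Set.mem_Ici.mpr (by linarith)) hM
    · exact hhanti (Set.mem_Ici.mpr (hM0 n)) (Set.mem_Ici.mpr (by linarith)) hM
  have hdomf : ∀ lam : ℕ, N₀ ≤ lam → ∀ n : ℤ, ‖fT lam n‖ ≤ bound n := by
    intro lam hlam n
    by_cases hn : n = 0
    · simp [hfT_def, hbound_def, hn]
    · have h1 := hnormf lam hlam n hn
      have h2 := (hgM lam hlam n hn).1
      have h3 : 0 ≤ h (M n) := hh0 _ (hM0 n)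
      simp only [hfT_def, hbound_def, if_neg hn]
      nlinarith [mul_le_mul_of_nonneg_left h2 hC2nn]
  have hdomd : ∀ lam : ℕ, N₀ ≤ lam → ∀ n : ℤ, ‖dT lam n‖ ≤ bound n := by
    intro lam hlam n
    by_cases hn : n = 0
    · simp [hdT_def, hbound_def, hn]
    · have h1 := hnormd lam hlam n hn
      have h2 := (hgM lam hlam n hn).2
      have h3 : 0 ≤ g (M n) := hg0 _ (hM0 n)
      simp only [hdT_def, hbound_def, if_neg hn]
      nlinarith [mul_le_mul_of_nonneg_left h2 hC2nn]
  -- summability of the bound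
  have hboundsum : Summable bound := by
    have heven : ∀ n : ℤ, bound (-n) = bound n := by
      intro n
      simp only [hbound_def, hM_def, neg_eq_zero, Int.cast_neg, abs_neg]
    have hnat1 : Summable fun n : ℕ => bound ((n : ℤ) + 1) := by
      refine Summable.of_nonneg_of_le (fun n => hbound0 _)
        (f := fun n : ℕ =>
          C2 * (if |k| + Q + 1 < 2 * Real.pi * (n + 1) / Δx₀ then
              g (2 * Real.pi * (n + 1) / Δx₀ - |k| - 1) +
                h (2 * Real.pi * (n + 1) / Δx₀ - |k| - 1) else 0) +
            (if |k| + Q + 1 < 2 * Real.pi * (n + 1) / Δx₀ then 0 else C2 * (g Q + h Q)))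
        ?_ ?_
      · intro n
        have hne : ((n : ℤ) + 1) ≠ 0 := by omega
        have habs : |(((n : ℤ) + 1 : ℤ) : ℝ)| = (n : ℝ) + 1 := by
          push_cast
          rw [abs_of_nonneg (by positivity)]
        have hcn : c * ((n : ℝ) + 1) = 2 * Real.pi * (n + 1) / Δx₀ := by
          rw [hc_def]; ring
        by_cases hcond : |k| + Q + 1 < 2 * Real.pi * (n + 1) / Δx₀
        · have hMval : M ((n : ℤ) + 1) = 2 * Real.pi * (n + 1) / Δx₀ - |k| - 1 := by
            simp only [hM_def, habs, hcn]
            exact max_eq_right (by linarith)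
          simp only [hbound_def, if_neg hne, hMval, if_pos hcond]
          simp
        · have hMQ : Q ≤ M ((n : ℤ) + 1) := le_max_left _ _
          have hgle : g (M ((n : ℤ) + 1)) ≤ g Q :=
            hganti (Set.mem_Ici.mpr hQ.le) (Set.mem_Ici.mpr (hM0 _)) hMQ
          have hhle : h (M ((n : ℤ) + 1)) ≤ h Q :=
            hhanti (Set.mem_Ici.mpr hQ.le) (Set.mem_Ici.mpr (hM0 _)) hMQ
          simp only [hbound_def, if_neg hne, if_neg hcond]
          nlinarith
      · refine Summable.add (hsum.mul_left C2) ?_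
        refine summable_of_ne_finset_zero (s := Finset.range N₀) ?_
        intro n hn
        simp only [Finset.mem_range, not_lt] at hn
        have hn' : (N₀ : ℝ) ≤ n := by exact_mod_cast hn
        have : |k| + Q + 1 < 2 * Real.pi * (n + 1) / Δx₀ := by
          have h1 : c * N₀ < c * ((n : ℝ) + 1) := by nlinarith
          have h2 : c * ((n : ℝ) + 1) = 2 * Real.pi * (n + 1) / Δx₀ := by
            rw [hc_def]; ring
          linarith [hN₀c]
        simp [this]
    have hnat : Summable fun n : ℕ => bound (n : ℤ) := by
      refine (summable_nat_add_iff 1).mp ?_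
      refine hnat1.congr fun n => ?_
      push_cast
      ring_nf
    refine Summable.of_nat_of_neg hnat ?_
    exact hnat.congr fun n => (heven n).symm
  -- pointwise convergence of tail terms to zero
  have harg : ∀ n : ℤ, n ≠ 0 →
      Tendsto (fun lam : ℕ => c * |(n : ℝ)| * lam - |k|) atTop atTop := by
    intro n hn
    have h1 : (1 : ℝ) ≤ |(n : ℝ)| := by
      have := Int.one_le_abs hn
      calc (1 : ℝ) = ((1 : ℤ) : ℝ) := by norm_num
      _ ≤ ((|n| : ℤ) : ℝ) := by exact_mod_cast this
      _ = |(n : ℝ)| := by push_cast; ring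
    have hpos : 0 < c * |(n : ℝ)| := by nlinarith
    have := (tendsto_natCast_atTop_atTop (R := ℝ)).const_mul_atTop hpos
    have h2 := tendsto_atTop_add_const_right atTop (-|k|) this
    refine h2.congr fun lam => by ring
  have hptf : ∀ n : ℤ, Tendsto (fun lam : ℕ => fT lam n) atTop (nhds 0) := by
    intro n
    by_cases hn : n = 0
    · simp only [hfT_def, hn, if_pos rfl]
      exact tendsto_const_nhds
    · refine squeeze_zero_norm' (a := fun lam : ℕ => C2 * g (c * |(n : ℝ)| * lam - |k|)) ?_ ?_
      · filter_upwards [eventually_ge_atTop N₀] with lam hlam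
        simp only [hfT_def, if_neg hn]
        exact hnormf lam hlam n hn
      · have := (hgtend.comp (harg n hn)).const_mul C2
        simpa using this
  have hptd : ∀ n : ℤ, Tendsto (fun lam : ℕ => dT lam n) atTop (nhds 0) := by
    intro n
    by_cases hn : n = 0
    · simp only [hdT_def, hn, if_pos rfl]
      exact tendsto_const_nhds
    · refine squeeze_zero_norm' (a := fun lam : ℕ => C2 * h (c * |(n : ℝ)| * lam - |k|)) ?_ ?_
      · filter_upwards [eventually_ge_atTop N₀] with lam hlam
        simp only [hdT_def, if_neg hn]
        exact hnormd lam hlam n hn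
      · have := (hhtend.comp (harg n hn)).const_mul C2
        simpa using this
  -- tail sums tend to zero
  have htailf : Tendsto (fun lam : ℕ => ∑' n : ℤ, fT lam n) atTop (nhds 0) := by
    have := tendsto_tsum_of_dominated_convergence (f := fT) (g := fun _ => (0 : ℂ))
      hboundsum hptf ?_
    · simpa [tsum_zero] using this
    · filter_upwards [eventually_ge_atTop N₀] with lam hlam
      exact hdomf lam hlam
  have htaild : Tendsto (fun lam : ℕ => ∑' n : ℤ, dT lam n) atTop (nhds 0) := by
    have := tendsto_tsum_of_dominated_convergence (f := dT) (g := fun _ => (0 : ℂ))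
      hboundsum hptd ?_
    · simpa [tsum_zero] using this
    · filter_upwards [eventually_ge_atTop N₀] with lam hlam
      exact hdomd lam hlam
  -- splitting the sums (eventually in lam)
  have hsplitf : ∀ᶠ lam in atTop,
      (∑' n : ℤ, f lam n) = (∑' n : ℤ, fT lam n) + f lam 0 := by
    filter_upwards [eventually_ge_atTop N₀] with lam hlam
    have hsT : Summable (fT lam) :=
      Summable.of_norm_bounded hboundsum (hdomf lam hlam)
    have hs0 : Summable (fun n : ℤ => if n = 0 then f lam 0 else 0) := by
      refine summable_of_ne_finset_zero (s := {0}) ?_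
      intro n hn
      simp only [Finset.mem_singleton] at hn
      simp [hn]
    have heq : (f lam) = fun n => fT lam n + (if n = 0 then f lam 0 else 0) := by
      funext n
      by_cases hn : n = 0 <;> simp [hfT_def, hn]
    calc (∑' n : ℤ, f lam n)
        = ∑' n : ℤ, (fT lam n + (if n = 0 then f lam 0 else 0)) := by rw [← heq]
    _ = (∑' n : ℤ, fT lam n) + ∑' n : ℤ, (if n = 0 then f lam 0 else 0) :=
        Summable.tsum_add hsT hs0
    _ = (∑' n : ℤ, fT lam n) + f lam 0 := by rw [tsum_ite_eq]
  have hsplitd : ∀ᶠ lam in atTop,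
      (∑' n : ℤ, d lam n) = (∑' n : ℤ, dT lam n) + d lam 0 := by
    filter_upwards [eventually_ge_atTop N₀] with lam hlam
    have hsT : Summable (dT lam) :=
      Summable.of_norm_bounded hboundsum (hdomd lam hlam)
    have hs0 : Summable (fun n : ℤ => if n = 0 then d lam 0 else 0) := by
      refine summable_of_ne_finset_zero (s := {0}) ?_
      intro n hn
      simp only [Finset.mem_singleton] at hn
      simp [hn]
    have heq : (d lam) = fun n => dT lam n + (if n = 0 then d lam 0 else 0) := by
      funext n
      by_cases hn : n = 0 <;> simp [hdT_def, hn]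
    calc (∑' n : ℤ, d lam n)
        = ∑' n : ℤ, (dT lam n + (if n = 0 then d lam 0 else 0)) := by rw [← heq]
    _ = (∑' n : ℤ, dT lam n) + ∑' n : ℤ, (if n = 0 then d lam 0 else 0) :=
        Summable.tsum_add hsT hs0
    _ = (∑' n : ℤ, dT lam n) + d lam 0 := by rw [tsum_ite_eq]
  -- convergence of the zero-mode terms
  have hk0 : Tendsto (fun lam : ℕ => k / (lam : ℝ)) atTop (nhds 0) :=
    tendsto_const_div_atTop_nhds_zero_nat k
  have hBt : Tendsto (fun lam : ℕ => ((‖Bhat (k / (lam : ℝ))‖ ^ 2 : ℝ) : ℂ)) atTop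
      (nhds ((‖Bhat 0‖ ^ 2 : ℝ) : ℂ)) := by
    have h1 : Tendsto (fun lam : ℕ => Bhat (k / (lam : ℝ))) atTop (nhds (Bhat 0)) :=
      hBcont.tendsto.comp hk0
    have h2 := (h1.norm.pow 2)
    exact (Complex.continuous_ofReal.continuousAt.tendsto).comp h2
  have hf0 : Tendsto (fun lam : ℕ => f lam 0) atTop
      (nhds (Ubar k * (Φ k : ℂ) * ((‖Bhat 0‖ ^ 2 : ℝ) : ℂ))) := by
    have heq : (fun lam : ℕ => f lam 0)
        = fun lam : ℕ => Ubar k * (Φ k : ℂ) * ((‖Bhat (k / (lam : ℝ))‖ ^ 2 : ℝ) : ℂ) := by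
      funext lam
      simp [hf_def]
    rw [heq]
    exact hBt.const_mul _
  have hd0 : Tendsto (fun lam : ℕ => d lam 0) atTop
      (nhds ((Φ k : ℂ) * ((‖Bhat 0‖ ^ 2 : ℝ) : ℂ))) := by
    have heq : (fun lam : ℕ => d lam 0)
        = fun lam : ℕ => (Φ k : ℂ) * ((‖Bhat (k / (lam : ℝ))‖ ^ 2 : ℝ) : ℂ) := by
      funext lam
      simp [hd_def]
    rw [heq]
    exact hBt.const_mul _
  -- combine
  have hNum : Tendsto (fun lam : ℕ => ∑' n : ℤ, f lam n) atTop
      (nhds (Ubar k * (Φ k : ℂ) * ((‖Bhat 0‖ ^ 2 : ℝ) : ℂ))) := by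
    refine Tendsto.congr' (hsplitf.mono fun lam hl => hl.symm) ?_
    have := htailf.add hf0
    simpa using this
  have hDen : Tendsto (fun lam : ℕ => ∑' n : ℤ, d lam n) atTop
      (nhds ((Φ k : ℂ) * ((‖Bhat 0‖ ^ 2 : ℝ) : ℂ))) := by
    refine Tendsto.congr' (hsplitd.mono fun lam hl => hl.symm) ?_
    have := htaild.add hd0
    simpa using this
  have hB0pos : (0 : ℝ) < ‖Bhat 0‖ ^ 2 := by
    have : (0 : ℝ) < ‖Bhat 0‖ := norm_pos_iff.mpr hB0
    positivity
  have hL2ne : ((Φ k : ℂ) * ((‖Bhat 0‖ ^ 2 : ℝ) : ℂ)) ≠ 0 := by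
    exact mul_ne_zero (Complex.ofReal_ne_zero.mpr (ne_of_gt hΦk))
      (Complex.ofReal_ne_zero.mpr (ne_of_gt hB0pos))
  have hfinal := hNum.div hDen hL2ne
  have hlim : Ubar k * (Φ k : ℂ) * ((‖Bhat 0‖ ^ 2 : ℝ) : ℂ) /
      ((Φ k : ℂ) * ((‖Bhat 0‖ ^ 2 : ℝ) : ℂ)) = Ubar k := by
    rw [mul_assoc, mul_div_assoc, div_self hL2ne, mul_one]
  rw [hlim] at hfinal
  refine Tendsto.congr (fun lam => ?_) hfinal
  rfl
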